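/- Let G be an abelian group and (f_n)_{n∈ℕ} a generalized moment sequence (f₀(0)=1 and f_n(x+y) = Σ_{k=0}^{n} C(n,k) f_k(x) f_{n-k}(y) for all n, x, y). Then there exist an exponential m : G → ℂ and additive functions a₁, a₂, ... : G → ℂ such that f_n(x) = B_n(a₁(x),...,a_n(x)) m(x) for every n and every x ∈ G. -/

import Mathlib

/-- The `n`-th complete (exponential) Bell polynomial, as a function of the
sequence of variables `t 1, t 2, ...` (the value `t 0` is unused). -/
noncomputable def bell : ℕ → (ℕ → ℂ) → ℂ
  | 0, _ => 1
  | n + 1, t => ∑ i ∈ Finset.range (n + 1),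
      (n.choose i : ℂ) * bell (n - i) t * t (i + 1)
decreasing_by omega

lemma bell_zero (t : ℕ → ℂ) : bell 0 t = 1 := by rw [bell]

lemma bell_succ (n : ℕ) (t : ℕ → ℂ) :
    bell (n + 1) t = ∑ i ∈ Finset.range (n + 1),
      (n.choose i : ℂ) * bell (n - i) t * t (i + 1) := by
  rw [bell]

lemma bell_congr (n : ℕ) : ∀ (s t : ℕ → ℂ), (∀ j, j ≤ n → s j = t j) →
    bell n s = bell n t := by
  induction n using Nat.strong_induction_on with
  | _ n ih =>
    match n with
    | 0 => intro s t _; rw [bell_zero, bell_zero]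
    | n + 1 =>
      intro s t h
      rw [bell_succ, bell_succ]
      refine Finset.sum_congr rfl fun i hi => ?_
      have hi' : i ≤ n := by simpa [Nat.lt_succ_iff] using hi
      rw [ih (n - i) (by omega) s t (fun j hj => h j (by omega)), h (i + 1) (by omega)]

lemma choose_trinom {n k i : ℕ} (h : k + i ≤ n) :
    n.choose k * (n - k).choose i = n.choose i * (n - i).choose k := by
  have h1 := Nat.choose_mul (n := n) (Nat.le_add_right k i)
  have h2 := Nat.choose_mul (n := n) (Nat.le_add_left i k)
  rw [Nat.add_sub_cancel_left] at h1
  rw [Nat.add_sub_cancel] at h2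
  have h3 : (k + i).choose k = (k + i).choose i := by
    have := Nat.choose_symm (Nat.le_add_right k i)
    rw [Nat.add_sub_cancel_left] at this
    exact this.symm
  rw [← h1, ← h2, h3]

lemma conv_rec (u v a b : ℕ → ℂ)
    (ha : ∀ n, a (n + 1) = ∑ i ∈ Finset.range (n + 1),
      (n.choose i : ℂ) * a (n - i) * u (i + 1))
    (hb : ∀ n, b (n + 1) = ∑ i ∈ Finset.range (n + 1),
      (n.choose i : ℂ) * b (n - i) * v (i + 1)) (n : ℕ) :
    ∑ k ∈ Finset.range (n + 2), ((n + 1).choose k : ℂ) * a k * b (n + 1 - k)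
      = ∑ i ∈ Finset.range (n + 1), (n.choose i : ℂ) *
          (∑ k ∈ Finset.range (n - i + 1), ((n - i).choose k : ℂ) * a k * b (n - i - k))
          * (u (i + 1) + v (i + 1)) := by
  have hS3 : ∑ k ∈ Finset.range (n + 2), ((n + 1).choose k : ℂ) * a k * b (n + 1 - k)
      = (∑ k ∈ Finset.range (n + 1), (n.choose k : ℂ) * a (k + 1) * b (n - k))
        + ∑ k ∈ Finset.range (n + 1), (n.choose k : ℂ) * a k * b (n + 1 - k) := by
    rw [Finset.sum_range_succ' (fun k => ((n + 1).choose k : ℂ) * a k * b (n + 1 - k))]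
    have hsplit : ∀ k ∈ Finset.range (n + 1),
        ((n + 1).choose (k + 1) : ℂ) * a (k + 1) * b (n + 1 - (k + 1))
          = (n.choose k : ℂ) * a (k + 1) * b (n - k)
            + (n.choose (k + 1) : ℂ) * a (k + 1) * b (n - k) := by
      intro k _
      have : ((n + 1).choose (k + 1) : ℂ) = (n.choose k : ℂ) + (n.choose (k + 1) : ℂ) := by
        rw [Nat.choose_succ_succ]; push_cast; ring
      rw [this]
      have : n + 1 - (k + 1) = n - k := by omega
      rw [this]; ring
    rw [Finset.sum_congr rfl hsplit, Finset.sum_add_distrib]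
    have this2 : ∑ k ∈ Finset.range (n + 2), (n.choose k : ℂ) * a k * b (n + 1 - k)
        = (∑ k ∈ Finset.range (n + 1), (n.choose (k + 1) : ℂ) * a (k + 1) * b (n - k))
          + (n.choose 0 : ℂ) * a 0 * b (n + 1 - 0) := by
      rw [Finset.sum_range_succ' (fun k => (n.choose k : ℂ) * a k * b (n + 1 - k))]
      congr 1
      refine Finset.sum_congr rfl fun k _ => ?_
      have hsub : n + 1 - (k + 1) = n - k := by omega
      rw [hsub]
    have h4 : ∑ k ∈ Finset.range (n + 2), (n.choose k : ℂ) * a k * b (n + 1 - k)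
        = ∑ k ∈ Finset.range (n + 1), (n.choose k : ℂ) * a k * b (n + 1 - k) := by
      rw [Finset.sum_range_succ]
      simp [Nat.choose_succ_self]
    have h2 : (∑ k ∈ Finset.range (n + 1), (n.choose (k + 1) : ℂ) * a (k + 1) * b (n - k))
        + ((n + 1).choose 0 : ℂ) * a 0 * b (n + 1 - 0)
        = ∑ k ∈ Finset.range (n + 1), (n.choose k : ℂ) * a k * b (n + 1 - k) := by
      rw [← h4, this2]
      simp
    rw [add_assoc, h2]
  rw [hS3]
  have hRHS : ∑ i ∈ Finset.range (n + 1), (n.choose i : ℂ) *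
        (∑ k ∈ Finset.range (n - i + 1), ((n - i).choose k : ℂ) * a k * b (n - i - k))
        * (u (i + 1) + v (i + 1))
      = (∑ i ∈ Finset.range (n + 1), ∑ k ∈ Finset.range (n - i + 1),
          (n.choose i : ℂ) * ((n - i).choose k : ℂ) * a k * b (n - i - k) * u (i + 1))
        + ∑ i ∈ Finset.range (n + 1), ∑ k ∈ Finset.range (n - i + 1),
          (n.choose i : ℂ) * ((n - i).choose k : ℂ) * a k * b (n - i - k) * v (i + 1) := by
    rw [← Finset.sum_add_distrib]
    refine Finset.sum_congr rfl fun i _ => ?_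
    rw [Finset.mul_sum, Finset.sum_mul, ← Finset.sum_add_distrib]
    refine Finset.sum_congr rfl fun k _ => ?_
    ring
  rw [hRHS]
  congr 1
  · -- S1 = u-part
    have expand : ∀ k ∈ Finset.range (n + 1),
        (n.choose k : ℂ) * a (k + 1) * b (n - k)
          = ∑ i ∈ Finset.range (k + 1),
              (n.choose k : ℂ) * ((k.choose i : ℂ) * a (k - i) * u (i + 1)) * b (n - k) := by
      intro k _
      rw [ha k, Finset.mul_sum, Finset.sum_mul]
    rw [Finset.sum_congr rfl expand]
    rw [Finset.sum_comm' (s := Finset.range (n + 1)) (t := fun k => Finset.range (k + 1))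
      (t' := Finset.range (n + 1)) (s' := fun i => Finset.Ico i (n + 1))
      (h := by intro k i; simp [Finset.mem_range, Finset.mem_Ico]; omega)]
    refine Finset.sum_congr rfl fun i hi => ?_
    have hi' : i ≤ n := by simpa [Nat.lt_succ_iff] using hi
    rw [Finset.sum_Ico_eq_sum_range]
    have hn : n + 1 - i = n - i + 1 := by omega
    rw [hn]
    refine Finset.sum_congr rfl fun j hj => ?_
    have hj' : j ≤ n - i := by simpa [Nat.lt_succ_iff] using hj
    have hij : i + j ≤ n := by omega
    have hcast : (n.choose (i + j) : ℂ) * ((i + j).choose i : ℂ)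
        = (n.choose i : ℂ) * ((n - i).choose j : ℂ) := by
      have := Nat.choose_mul (n := n) (Nat.le_add_right i j)
      rw [Nat.add_sub_cancel_left] at this
      exact_mod_cast this
    have h1 : i + j - i = j := by omega
    have h2 : n - (i + j) = n - i - j := by omega
    rw [h1, h2]
    calc (n.choose (i + j) : ℂ) * ((i + j).choose i * a j * u (i + 1)) * b (n - i - j)
        = ((n.choose (i + j) : ℂ) * ((i + j).choose i : ℂ)) * a j * b (n - i - j) * u (i + 1) := by
          ring
      _ = (n.choose i : ℂ) * ((n - i).choose j : ℂ) * a j * b (n - i - j) * u (i + 1) := by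
          rw [hcast]
  · -- S3 = v-part
    have expand : ∀ k ∈ Finset.range (n + 1),
        (n.choose k : ℂ) * a k * b (n + 1 - k)
          = ∑ i ∈ Finset.range (n - k + 1),
              (n.choose k : ℂ) * ((n - k).choose i : ℂ) * a k * b (n - k - i) * v (i + 1) := by
      intro k hk
      have hk' : k ≤ n := by simpa [Nat.lt_succ_iff] using hk
      have : n + 1 - k = (n - k) + 1 := by omega
      rw [this, hb (n - k), Finset.mul_sum]
      refine Finset.sum_congr rfl fun i _ => ?_
      ring
    rw [Finset.sum_congr rfl expand]
    rw [Finset.sum_comm' (s := Finset.range (n + 1)) (t := fun k => Finset.range (n - k + 1))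
      (t' := Finset.range (n + 1)) (s' := fun i => Finset.range (n - i + 1))
      (h := by intro k i; simp only [Finset.mem_range]; omega)]
    refine Finset.sum_congr rfl fun i hi => ?_
    refine Finset.sum_congr rfl fun k hk => ?_
    have hi' : i ≤ n := by simpa [Nat.lt_succ_iff] using hi
    have hk' : k ≤ n - i := by simpa [Nat.lt_succ_iff] using hk
    have htri : n.choose k * (n - k).choose i = n.choose i * (n - i).choose k :=
      choose_trinom (by omega)
    have h2 : n - k - i = n - i - k := by omega
    rw [h2]
    have : (n.choose k : ℂ) * ((n - k).choose i : ℂ)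
        = (n.choose i : ℂ) * ((n - i).choose k : ℂ) := by exact_mod_cast htri
    calc (n.choose k : ℂ) * ((n - k).choose i : ℂ) * a k * b (n - i - k) * v (i + 1)
        = ((n.choose k : ℂ) * ((n - k).choose i : ℂ)) * a k * b (n - i - k) * v (i + 1) := by ring
      _ = (n.choose i : ℂ) * ((n - i).choose k : ℂ) * a k * b (n - i - k) * v (i + 1) := by
          rw [this]

/-- Binomial convolution identity for complete Bell polynomials. -/
lemma bell_add (s t : ℕ → ℂ) : ∀ n : ℕ,
    bell n (fun j => s j + t j) = ∑ k ∈ Finset.range (n + 1),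
      (n.choose k : ℂ) * bell k s * bell (n - k) t := by
  intro n
  induction n using Nat.strong_induction_on with
  | _ n ih =>
    match n with
    | 0 => simp [bell_zero]
    | n + 1 =>
      rw [bell_succ]
      have h1 : ∀ i ∈ Finset.range (n + 1),
          (n.choose i : ℂ) * bell (n - i) (fun j => s j + t j) * (s (i + 1) + t (i + 1))
            = (n.choose i : ℂ) * (∑ k ∈ Finset.range (n - i + 1),
                ((n - i).choose k : ℂ) * bell k s * bell (n - i - k) t)
              * (s (i + 1) + t (i + 1)) := by
        intro i _
        rw [ih (n - i) (by omega)]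
      rw [Finset.sum_congr rfl h1]
      exact (conv_rec s t (fun k => bell k s) (fun k => bell k t)
        (fun n => bell_succ n s) (fun n => bell_succ n t) n).symm

lemma bell_sub (n : ℕ) (s t : ℕ → ℂ) (h : ∀ j, j ≤ n → s j = t j) :
    bell (n + 1) s - s (n + 1) = bell (n + 1) t - t (n + 1) := by
  rw [bell_succ, bell_succ, Finset.sum_range_succ, Finset.sum_range_succ]
  simp only [Nat.choose_self, Nat.cast_one, Nat.sub_self, bell_zero, one_mul, mul_one]
  have : ∀ i ∈ Finset.range n,
      (n.choose i : ℂ) * bell (n - i) s * s (i + 1)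
        = (n.choose i : ℂ) * bell (n - i) t * t (i + 1) := by
    intro i hi
    have hi' : i < n := Finset.mem_range.mp hi
    rw [bell_congr (n - i) s t (fun j hj => h j (by omega)), h (i + 1) (by omega)]
  rw [Finset.sum_congr rfl this]
  ring

/-- Auxiliary sequence: `aAux g n` is `g n` minus the part of the Bell polynomial
not containing `t n`. -/
noncomputable def aAux (g : ℕ → ℂ) : ℕ → ℂ
  | 0 => 0
  | n + 1 => g (n + 1) - bell (n + 1) (fun j => if h : j < n + 1 then aAux g j else 0)
decreasing_by exact h

lemma bell_aAux (g : ℕ → ℂ) (n : ℕ) : bell (n + 1) (aAux g) = g (n + 1) := by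
  have h := bell_sub n (aAux g) (fun j => if h : j < n + 1 then aAux g j else 0)
    (fun j hj => by simp [Nat.lt_succ_iff.mpr hj])
  have hz : (fun j => if h : j < n + 1 then aAux g j else 0) (n + 1) = 0 := by simp
  rw [dif_neg (lt_irrefl _), sub_zero] at h
  have ha : aAux g (n + 1)
      = g (n + 1) - bell (n + 1) (fun j => if h : j < n + 1 then aAux g j else 0) := by
    rw [aAux]
  have hb := sub_eq_iff_eq_add.mp h
  rw [hb, ha]; ring

theorem stmt_15 {G : Type*} [AddCommGroup G]
    (f : ℕ → G → ℂ) (h0 : f 0 0 = 1)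
    (hf : ∀ (n : ℕ) (x y : G),
      f n (x + y) = ∑ k ∈ Finset.range (n + 1),
        (n.choose k : ℂ) * f k x * f (n - k) y) :
    ∃ (m : G → ℂ) (a : ℕ → G → ℂ),
      (∀ x y : G, m (x + y) = m x * m y) ∧ (∀ x : G, m x ≠ 0) ∧
      (∀ j, ∀ x y : G, a j (x + y) = a j x + a j y) ∧
      ∀ (n : ℕ) (x : G), f n x = bell n (fun j => a j x) * m x := by
  have hm : ∀ x y : G, f 0 (x + y) = f 0 x * f 0 y := by
    intro x y
    simpa [Finset.sum_range_one] using hf 0 x y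
  have hne : ∀ x : G, f 0 x ≠ 0 := by
    intro x
    have h1 : f 0 x * f 0 (-x) = 1 := by
      rw [← hm x (-x)]
      simp [h0]
    exact left_ne_zero_of_mul_eq_one h1
  set a : ℕ → G → ℂ := fun n x => aAux (fun k => f k x / f 0 x) n with hadef
  have hbell : ∀ (n : ℕ) (x : G), bell n (fun j => a j x) = f n x / f 0 x := by
    intro n x
    match n with
    | 0 => rw [bell_zero]; exact (div_self (hne x)).symm
    | n + 1 => exact bell_aAux (fun k => f k x / f 0 x) n
  have hgconv : ∀ (n : ℕ) (x y : G), f n (x + y) / f 0 (x + y)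
      = ∑ k ∈ Finset.range (n + 1),
          (n.choose k : ℂ) * (f k x / f 0 x) * (f (n - k) y / f 0 y) := by
    intro n x y
    rw [hf n x y, hm x y, Finset.sum_div]
    refine Finset.sum_congr rfl fun k _ => ?_
    field_simp
  have hadd : ∀ (j : ℕ) (x y : G), a j (x + y) = a j x + a j y := by
    intro j
    induction j using Nat.strong_induction_on with
    | _ j ih =>
      match j with
      | 0 =>
        intro x y
        show aAux _ 0 = aAux _ 0 + aAux _ 0
        simp [aAux]
      | n + 1 =>
        intro x y
        have hT : (fun k => if h : k < n + 1 then a k (x + y) else 0)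
            = (fun k => if h : k < n + 1 then a k x + a k y else 0) := by
          funext k
          by_cases hk : k < n + 1
          · simp only [hk, dif_pos]
            exact ih k hk x y
          · simp [hk]
        have hg : f (n + 1) (x + y) / f 0 (x + y)
            = bell (n + 1) (fun j => a j x + a j y) := by
          rw [hgconv (n + 1) x y, bell_add (fun j => a j x) (fun j => a j y) (n + 1)]
          refine Finset.sum_congr rfl fun k _ => ?_
          rw [hbell k x, hbell (n + 1 - k) y]
        have hsub := bell_sub n (fun j => a j x + a j y)
          (fun k => if h : k < n + 1 then a k x + a k y else 0)
          (fun k hk => by simp [Nat.lt_succ_iff.mpr hk])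
        have hdef : a (n + 1) (x + y) = f (n + 1) (x + y) / f 0 (x + y)
            - bell (n + 1) (fun k => if h : k < n + 1 then a k (x + y) else 0) := by
          show aAux _ (n + 1) = _
          rw [aAux]
        rw [hdef, hT, hg]
        have hz : (fun k => if h : k < n + 1 then a k x + a k y else 0) (n + 1) = (0 : ℂ) := by
          simp
        rw [dif_neg (lt_irrefl _), sub_zero] at hsub
        have hs : (fun j => a j x + a j y) (n + 1) = a (n + 1) x + a (n + 1) y := rfl
        have _ := hs
        linear_combination hsub
  refine ⟨f 0, a, hm, hne, hadd, fun n x => ?_⟩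
  rw [hbell n x]
  exact (div_mul_cancel₀ (f n x) (hne x)).symm
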